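/- Hoeffding's corollary for two moving averages: Let X_1, ..., X_{n+m} be independent random variables with values in the interval [a,b], let X̄ = (1/n)∑_{i=1}^n X_i and Z̄ = (1/(n+m))∑_{i=1}^{n+m} X_i. Then for all ε ≥ 0, P(X̄ - Z̄ - (E[X̄] - E[Z̄]) ≥ ε) ≤ exp(-2n(n+m)ε² / (m(b-a)²)). -/

import Mathlib

open MeasureTheory ProbabilityTheory

open Real in

lemma hoeffding_key (p : ℝ) (hp0 : 0 ≤ p) (hp1 : p ≤ 1) (h : ℝ) :
    -(p * h) + Real.log (1 - p + p * Real.exp h) ≤ h ^ 2 / 8 := by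
  set D : ℝ → ℝ := fun x => 1 - p + p * Real.exp x with hDdef
  have hD : ∀ x, 0 < D x := by
    intro x
    have hx := Real.exp_pos x
    simp only [hDdef]
    rcases hp0.eq_or_lt with rfl | hp
    · simpa using one_pos
    · linarith [mul_pos hp hx]
  set g : ℝ → ℝ := fun x => x ^ 2 / 8 + p * x - Real.log (D x) with hgdef
  set g' : ℝ → ℝ := fun x => x / 4 + p - p * Real.exp x / D x with hg'def
  have hDd : ∀ x, HasDerivAt D (p * Real.exp x) x := by
    intro x
    exact ((Real.hasDerivAt_exp x).const_mul p).const_add (1 - p)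
  have hgd : ∀ x, HasDerivAt g (g' x) x := by
    intro x
    have hlog : HasDerivAt (fun x => Real.log (D x)) (p * Real.exp x / D x) x :=
      (hDd x).log (hD x).ne'
    have h1 : HasDerivAt (fun x : ℝ => x ^ 2 / 8 + p * x) (x / 4 + p) x := by
      have := ((hasDerivAt_pow 2 x).div_const 8).add ((hasDerivAt_id x).const_mul p)
      refine this.congr_deriv ?_
      norm_num
      ring
    exact h1.sub hlog
  have hg'd : ∀ x, HasDerivAt g' (1 / 4 - p * Real.exp x * (1 - p) / (D x) ^ 2) x := by
    intro x
    have hdiv : HasDerivAt (fun x => p * Real.exp x / D x)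
        ((p * Real.exp x * D x - p * Real.exp x * (p * Real.exp x)) / (D x) ^ 2) x :=
      (((Real.hasDerivAt_exp x).const_mul p)).div (hDd x) (hD x).ne'
    have h1 : HasDerivAt (fun x : ℝ => x / 4 + p) (1 / 4) x := by
      simpa using ((hasDerivAt_id x).div_const 4).add_const p
    have := h1.sub hdiv
    refine this.congr_deriv ?_
    simp only [hDdef]
    ring
  have hg'' : ∀ x, 0 ≤ 1 / 4 - p * Real.exp x * (1 - p) / (D x) ^ 2 := by
    intro x
    rw [sub_nonneg, div_le_iff₀ (pow_pos (hD x) 2)]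
    simp only [hDdef]
    nlinarith [sq_nonneg (1 - p - p * Real.exp x), Real.exp_pos x]
  have hg'mono : Monotone g' := by
    apply monotone_of_deriv_nonneg
    · exact fun x => (hg'd x).differentiableAt
    · intro x
      rw [(hg'd x).deriv]
      exact hg'' x
  have hg'0 : g' 0 = 0 := by simp [hg'def, hDdef]
  have hgcont : Continuous g := by
    have : Differentiable ℝ g := fun x => (hgd x).differentiableAt
    exact this.continuous
  have hg0 : g 0 = 0 := by simp [hgdef, hDdef]
  have hmain : 0 ≤ g h := by
    rcases le_total 0 h with hh | hh
    · have hmono : MonotoneOn g (Set.Ici 0) := by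
        apply monotoneOn_of_deriv_nonneg (convex_Ici 0) hgcont.continuousOn
        · intro x _
          exact (hgd x).differentiableAt.differentiableWithinAt
        · intro x hx
          rw [(hgd x).deriv]
          rw [interior_Ici] at hx
          have := hg'mono (le_of_lt hx)
          rw [hg'0] at this
          exact this
      have := hmono (Set.self_mem_Ici) (Set.mem_Ici.2 hh) hh
      rw [hg0] at this; exact this
    · have hmono : AntitoneOn g (Set.Iic 0) := by
        apply antitoneOn_of_deriv_nonpos (convex_Iic 0) hgcont.continuousOn
        · intro x _
          exact (hgd x).differentiableAt.differentiableWithinAt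
        · intro x hx
          rw [(hgd x).deriv]
          rw [interior_Iic] at hx
          have := hg'mono (le_of_lt hx)
          rw [hg'0] at this
          exact this
      have := hmono (Set.mem_Iic.2 hh) (Set.self_mem_Iic) hh
      rw [hg0] at this; exact this
  simp only [hgdef, hDdef] at hmain
  linarith

lemma integrable_of_bdd {Ω : Type*} [MeasurableSpace Ω] {μ : Measure Ω} [IsFiniteMeasure μ]
    {X : Ω → ℝ} (hX : Measurable X) {a b : ℝ} (hb : ∀ᵐ ω ∂μ, X ω ∈ Set.Icc a b) :
    Integrable X μ := by
  refine Integrable.mono' (integrable_const (max |a| |b|)) hX.aestronglyMeasurable ?_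
  filter_upwards [hb] with ω hω
  rw [Real.norm_eq_abs]
  exact abs_le_max_abs_abs hω.1 hω.2

lemma integrable_exp_of_bdd {Ω : Type*} [MeasurableSpace Ω] {μ : Measure Ω} [IsFiniteMeasure μ]
    {X : Ω → ℝ} (hX : Measurable X) {a b : ℝ} (hb : ∀ᵐ ω ∂μ, X ω ∈ Set.Icc a b) (t : ℝ) :
    Integrable (fun ω => Real.exp (t * X ω)) μ := by
  refine Integrable.mono' (integrable_const (Real.exp (|t| * max |a| |b|)))
    ((hX.const_mul t).exp).aestronglyMeasurable ?_
  filter_upwards [hb] with ω hω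
  rw [Real.norm_eq_abs, abs_of_pos (Real.exp_pos _), Real.exp_le_exp]
  calc t * X ω ≤ |t * X ω| := le_abs_self _
    _ = |t| * |X ω| := abs_mul _ _
    _ ≤ |t| * max |a| |b| := by
        refine mul_le_mul_of_nonneg_left ?_ (abs_nonneg t)
        exact abs_le_max_abs_abs hω.1 hω.2

/-- Hoeffding's lemma. -/
lemma hoeffding_mgf {Ω : Type*} [MeasurableSpace Ω] (μ : Measure Ω) [IsProbabilityMeasure μ]
    {X : Ω → ℝ} (hX : Measurable X) {a b : ℝ} (hab : a < b)
    (hb : ∀ᵐ ω ∂μ, X ω ∈ Set.Icc a b) (h0 : μ[X] = 0) (t : ℝ) :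
    mgf X μ t ≤ Real.exp (t ^ 2 * (b - a) ^ 2 / 8) := by
  have hba : (0:ℝ) < b - a := by linarith
  have hintX : Integrable X μ := integrable_of_bdd hX hb
  have ha0 : a ≤ 0 := by
    have : ∫ ω, (a:ℝ) ∂μ ≤ ∫ ω, X ω ∂μ := by
      refine integral_mono_ae (integrable_const a) hintX ?_
      filter_upwards [hb] with ω hω using hω.1
    simpa [h0] using this
  have hb0 : 0 ≤ b := by
    have : ∫ ω, X ω ∂μ ≤ ∫ ω, (b:ℝ) ∂μ := by
      refine integral_mono_ae hintX (integrable_const b) ?_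
      filter_upwards [hb] with ω hω using hω.2
    simpa [h0] using this
  set p : ℝ := -a / (b - a) with hpdef
  have hp0 : 0 ≤ p := div_nonneg (by linarith) hba.le
  have hp1 : p ≤ 1 := by
    rw [div_le_one hba]; linarith
  -- convexity bound pointwise
  have hint2 : Integrable (fun ω => (b - X ω) / (b - a) * Real.exp (t * a)
      + (X ω - a) / (b - a) * Real.exp (t * b)) μ := by
    refine Integrable.add ?_ ?_
    · exact (((integrable_const b).sub hintX).div_const _).mul_const _
    · exact ((hintX.sub (integrable_const a)).div_const _).mul_const _
  have hstep1 : mgf X μ t ≤ ∫ ω, ((b - X ω) / (b - a) * Real.exp (t * a)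
      + (X ω - a) / (b - a) * Real.exp (t * b)) ∂μ := by
    refine integral_mono_ae (integrable_exp_of_bdd hX hb t) hint2 ?_
    filter_upwards [hb] with ω hω
    have hθ : 0 ≤ (b - X ω) / (b - a) := div_nonneg (by linarith [hω.2]) hba.le
    have hη : 0 ≤ (X ω - a) / (b - a) := div_nonneg (by linarith [hω.1]) hba.le
    have hsum : (b - X ω) / (b - a) + (X ω - a) / (b - a) = 1 := by
      field_simp
      ring
    have := convexOn_exp.2 (Set.mem_univ (t * a)) (Set.mem_univ (t * b)) hθ hη hsum
    simp only [smul_eq_mul] at this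
    calc Real.exp (t * X ω)
        = Real.exp ((b - X ω) / (b - a) * (t * a) + (X ω - a) / (b - a) * (t * b)) := by
          congr 1; field_simp; ring
      _ ≤ _ := this
  have hstep2 : ∫ ω, ((b - X ω) / (b - a) * Real.exp (t * a)
      + (X ω - a) / (b - a) * Real.exp (t * b)) ∂μ
      = (1 - p) * Real.exp (t * a) + p * Real.exp (t * b) := by
    have heq : (fun ω => (b - X ω) / (b - a) * Real.exp (t * a)
        + (X ω - a) / (b - a) * Real.exp (t * b))
        = fun ω => (b * Real.exp (t * a) - a * Real.exp (t * b)) / (b - a)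
          + X ω * ((Real.exp (t * b) - Real.exp (t * a)) / (b - a)) := by
      funext ω; field_simp; ring
    rw [heq, integral_add (integrable_const _) (hintX.mul_const _),
      integral_mul_const, h0, integral_const]
    simp only [measure_univ, probReal_univ, ENNReal.toReal_one, smul_eq_mul, one_mul, zero_mul, add_zero]
    rw [hpdef]
    field_simp
    ring
  set h : ℝ := t * (b - a) with hhdef
  have hD : 0 < 1 - p + p * Real.exp h := by
    rcases hp0.eq_or_lt with heq | hp
    · rw [← heq]; simp
    · have := Real.exp_pos h
      nlinarith
  have hstep3 : (1 - p) * Real.exp (t * a) + p * Real.exp (t * b)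
      = Real.exp (-(p * h) + Real.log (1 - p + p * Real.exp h)) := by
    rw [Real.exp_add, Real.exp_log hD]
    have hta : t * a = -(p * h) := by
      rw [hpdef, hhdef]; field_simp
    have htb : t * b = -(p * h) + h := by
      rw [hpdef, hhdef]; field_simp; ring
    rw [hta, htb, Real.exp_add]
    ring
  calc mgf X μ t ≤ (1 - p) * Real.exp (t * a) + p * Real.exp (t * b) := hstep1.trans hstep2.le
    _ = Real.exp (-(p * h) + Real.log (1 - p + p * Real.exp h)) := hstep3
    _ ≤ Real.exp (h ^ 2 / 8) := Real.exp_le_exp.2 (hoeffding_key p hp0 hp1 h)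
    _ = Real.exp (t ^ 2 * (b - a) ^ 2 / 8) := by rw [hhdef]; ring_nf


lemma hoeffding_sum {Ω : Type*} [MeasurableSpace Ω] (μ : Measure Ω) [IsProbabilityMeasure μ]
    (N : ℕ) (hN : 0 < N) (Y : ℕ → Ω → ℝ) (hmeas : ∀ i, Measurable (Y i))
    (hindep : iIndepFun Y μ)
    (A B : ℕ → ℝ) (hAB : ∀ i ∈ Finset.range N, A i < B i)
    (hb : ∀ i ∈ Finset.range N, ∀ᵐ ω ∂μ, Y i ω ∈ Set.Icc (A i) (B i))
    (h0 : ∀ i ∈ Finset.range N, μ[Y i] = 0) (ε : ℝ) (hε : 0 ≤ ε) :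
    (μ {ω | ε ≤ (∑ i ∈ Finset.range N, Y i) ω}).toReal
      ≤ Real.exp (-2 * ε ^ 2 / ∑ i ∈ Finset.range N, (B i - A i) ^ 2) := by
  set v : ℝ := ∑ i ∈ Finset.range N, (B i - A i) ^ 2 with hvdef
  have hv : 0 < v := by
    apply Finset.sum_pos
    · intro i hi
      exact pow_pos (sub_pos.2 (hAB i hi)) 2
    · exact ⟨0, Finset.mem_range.2 hN⟩
  set t : ℝ := 4 * ε / v with htdef
  have ht : 0 ≤ t := by positivity
  have hint : ∀ i ∈ Finset.range N, Integrable (fun ω => Real.exp (t * Y i ω)) μ :=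
    fun i hi => integrable_exp_of_bdd (hmeas i) (hb i hi) t
  have hintS : Integrable (fun ω => Real.exp (t * (∑ i ∈ Finset.range N, Y i) ω)) μ :=
    hindep.integrable_exp_mul_sum hmeas hint
  calc (μ {ω | ε ≤ (∑ i ∈ Finset.range N, Y i) ω}).toReal
      ≤ Real.exp (-t * ε) * mgf (∑ i ∈ Finset.range N, Y i) μ t :=
        measure_ge_le_exp_mul_mgf ε ht hintS
    _ = Real.exp (-t * ε) * ∏ i ∈ Finset.range N, mgf (Y i) μ t := by
        rw [hindep.mgf_sum hmeas]
    _ ≤ Real.exp (-t * ε) * ∏ i ∈ Finset.range N, Real.exp (t ^ 2 * (B i - A i) ^ 2 / 8) := by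
        refine mul_le_mul_of_nonneg_left ?_ (Real.exp_pos _).le
        refine Finset.prod_le_prod (fun i _ => mgf_nonneg) ?_
        intro i hi
        exact hoeffding_mgf μ (hmeas i) (hAB i hi) (hb i hi) (h0 i hi) t
    _ = Real.exp (-t * ε + ∑ i ∈ Finset.range N, t ^ 2 * (B i - A i) ^ 2 / 8) := by
        rw [← Real.exp_sum, ← Real.exp_add]
    _ = Real.exp (-2 * ε ^ 2 / v) := by
        congr 1
        rw [← Finset.sum_div, ← Finset.mul_sum, ← hvdef, htdef]
        field_simp
        ring

theorem hoeffding_two_averages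
    {Ω : Type*} [MeasurableSpace Ω] (μ : Measure Ω) [IsProbabilityMeasure μ]
    (n m : ℕ) (hn : 0 < n) (hm : 0 < m) (a b : ℝ) (hab : a < b)
    (X : ℕ → Ω → ℝ) (hmeas : ∀ i, Measurable (X i))
    (hindep : iIndepFun X μ)
    (hbound : ∀ i < n + m, ∀ᵐ ω ∂μ, X i ω ∈ Set.Icc a b)
    (ε : ℝ) (hε : 0 ≤ ε) :
    (μ {ω | (1 / n : ℝ) * ∑ i ∈ Finset.range n, X i ω
          - (1 / (n + m) : ℝ) * ∑ i ∈ Finset.range (n + m), X i ω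
          - (μ[fun ω => (1 / n : ℝ) * ∑ i ∈ Finset.range n, X i ω]
             - μ[fun ω => (1 / (n + m) : ℝ) * ∑ i ∈ Finset.range (n + m), X i ω])
          ≥ ε}).toReal
      ≤ Real.exp (-2 * (n : ℝ) * ((n : ℝ) + m) * ε ^ 2 / (m * (b - a) ^ 2)) := by
  have hnR : (0:ℝ) < n := Nat.cast_pos.2 hn
  have hmR : (0:ℝ) < m := Nat.cast_pos.2 hm
  have hnmR : (0:ℝ) < (n:ℝ) + m := by linarith
  have hba : (0:ℝ) < b - a := by linarith
  set E : ℕ → ℝ := fun i => μ[X i] with hEdef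
  set c : ℕ → ℝ := fun i => if i < n then (m:ℝ) / (n * ((n:ℝ) + m)) else -1 / ((n:ℝ) + m)
    with hcdef
  set Y : ℕ → Ω → ℝ := fun i ω => c i * (X i ω - E i) with hYdef
  have hYmeas : ∀ i, Measurable (Y i) := fun i => ((hmeas i).sub_const _).const_mul _
  have hYindep : iIndepFun Y μ := by
    have := hindep.comp (fun i (x : ℝ) => c i * (x - E i))
      (fun i => (measurable_id.sub_const _).const_mul _)
    exact this
  set A : ℕ → ℝ := fun i => if i < n then c i * (a - E i) else c i * (b - E i) with hAdef
  set B : ℕ → ℝ := fun i => if i < n then c i * (b - E i) else c i * (a - E i) with hBdef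
  have hcpos : ∀ i, i < n → 0 < c i := by
    intro i hi; simp only [hcdef, if_pos hi]; positivity
  have hcneg : ∀ i, ¬ i < n → c i < 0 := by
    intro i hi; simp only [hcdef, if_neg hi]
    apply div_neg_of_neg_of_pos <;> linarith
  have hAB : ∀ i ∈ Finset.range (n + m), A i < B i := by
    intro i _
    by_cases hi : i < n
    · simp only [hAdef, hBdef, if_pos hi]
      have := hcpos i hi
      nlinarith
    · simp only [hAdef, hBdef, if_neg hi]
      have := hcneg i hi
      nlinarith
  have hYb : ∀ i ∈ Finset.range (n + m), ∀ᵐ ω ∂μ, Y i ω ∈ Set.Icc (A i) (B i) := by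
    intro i hi
    filter_upwards [hbound i (Finset.mem_range.1 hi)] with ω hω
    obtain ⟨h1, h2⟩ := hω
    by_cases hin : i < n
    · have hc := hcpos i hin
      constructor
      · simp only [hYdef, hAdef, if_pos hin]; nlinarith
      · simp only [hYdef, hBdef, if_pos hin]; nlinarith
    · have hc := hcneg i hin
      constructor
      · simp only [hYdef, hAdef, if_neg hin]; nlinarith
      · simp only [hYdef, hBdef, if_neg hin]; nlinarith
  have hXint : ∀ i < n + m, Integrable (X i) μ :=
    fun i hi => integrable_of_bdd (hmeas i) (hbound i hi)
  have hY0 : ∀ i ∈ Finset.range (n + m), μ[Y i] = 0 := by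
    intro i hi
    simp only [hYdef]
    rw [integral_const_mul, integral_sub (hXint i (Finset.mem_range.1 hi)) (integrable_const _),
      integral_const]
    simp [hEdef]
  -- event equality
  have hE1 : μ[fun ω => (1 / n : ℝ) * ∑ i ∈ Finset.range n, X i ω]
      = (1 / n : ℝ) * ∑ i ∈ Finset.range n, E i := by
    rw [integral_const_mul, integral_finset_sum _
      (fun i hi => hXint i (lt_of_lt_of_le (Finset.mem_range.1 hi) (Nat.le_add_right n m)))]
  have hE2 : μ[fun ω => (1 / (n + m) : ℝ) * ∑ i ∈ Finset.range (n + m), X i ω]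
      = (1 / (n + m) : ℝ) * ∑ i ∈ Finset.range (n + m), E i := by
    rw [integral_const_mul, integral_finset_sum _
      (fun i hi => hXint i (Finset.mem_range.1 hi))]
  have hptwise : ∀ ω, (1 / n : ℝ) * ∑ i ∈ Finset.range n, X i ω
      - (1 / (n + m) : ℝ) * ∑ i ∈ Finset.range (n + m), X i ω
      - ((1 / n : ℝ) * ∑ i ∈ Finset.range n, E i
         - (1 / (n + m) : ℝ) * ∑ i ∈ Finset.range (n + m), E i)
      = (∑ i ∈ Finset.range (n + m), Y i) ω := by
    intro ω
    rw [Finset.sum_apply]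
    have hsplitX : ∑ i ∈ Finset.range (n + m), X i ω
        = ∑ i ∈ Finset.range n, X i ω + ∑ i ∈ Finset.range m, X (n + i) ω :=
      Finset.sum_range_add _ n m
    have hsplitE : ∑ i ∈ Finset.range (n + m), E i
        = ∑ i ∈ Finset.range n, E i + ∑ i ∈ Finset.range m, E (n + i) :=
      Finset.sum_range_add _ n m
    have hsplitY : ∑ i ∈ Finset.range (n + m), Y i ω
        = ∑ i ∈ Finset.range n, Y i ω + ∑ i ∈ Finset.range m, Y (n + i) ω :=
      Finset.sum_range_add _ n m
    have hY1 : ∑ i ∈ Finset.range n, Y i ω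
        = ((m:ℝ) / (n * ((n:ℝ) + m))) * ∑ i ∈ Finset.range n, (X i ω - E i) := by
      rw [Finset.mul_sum]
      refine Finset.sum_congr rfl fun i hi => ?_
      simp only [hYdef, hcdef, if_pos (Finset.mem_range.1 hi)]
    have hY2 : ∑ i ∈ Finset.range m, Y (n + i) ω
        = (-1 / ((n:ℝ) + m)) * ∑ i ∈ Finset.range m, (X (n + i) ω - E (n + i)) := by
      rw [Finset.mul_sum]
      refine Finset.sum_congr rfl fun i hi => ?_
      simp only [hYdef, hcdef, if_neg (by omega : ¬ n + i < n)]
    rw [hsplitX, hsplitE, hsplitY, hY1, hY2, Finset.sum_sub_distrib, Finset.sum_sub_distrib]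
    push_cast
    field_simp
    ring
  have hset : {ω | (1 / n : ℝ) * ∑ i ∈ Finset.range n, X i ω
          - (1 / (n + m) : ℝ) * ∑ i ∈ Finset.range (n + m), X i ω
          - (μ[fun ω => (1 / n : ℝ) * ∑ i ∈ Finset.range n, X i ω]
             - μ[fun ω => (1 / (n + m) : ℝ) * ∑ i ∈ Finset.range (n + m), X i ω])
          ≥ ε} = {ω | ε ≤ (∑ i ∈ Finset.range (n + m), Y i) ω} := by
    ext ω
    simp only [Set.mem_setOf_eq, ge_iff_le, hE1, hE2, hptwise ω]
  rw [hset]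
  have hmain := hoeffding_sum μ (n + m) (by omega) Y hYmeas hYindep A B hAB hYb hY0 ε hε
  refine hmain.trans (le_of_eq ?_)
  congr 1
  have hv : ∑ i ∈ Finset.range (n + m), (B i - A i) ^ 2
      = (b - a) ^ 2 * ((m:ℝ) / (n * ((n:ℝ) + m))) := by
    have : ∀ i ∈ Finset.range (n + m), (B i - A i) ^ 2 = (c i) ^ 2 * (b - a) ^ 2 := by
      intro i _
      by_cases hi : i < n
      · simp only [hAdef, hBdef, if_pos hi]; ring
      · simp only [hAdef, hBdef, if_neg hi]; ring
    rw [Finset.sum_congr rfl this, Finset.sum_range_add]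
    have h1 : ∀ i ∈ Finset.range n, (c i) ^ 2 * (b - a) ^ 2
        = ((m:ℝ) / (n * ((n:ℝ) + m))) ^ 2 * (b - a) ^ 2 := by
      intro i hi; simp only [hcdef, if_pos (Finset.mem_range.1 hi)]
    have h2 : ∀ i ∈ Finset.range m, (c (n + i)) ^ 2 * (b - a) ^ 2
        = (-1 / ((n:ℝ) + m)) ^ 2 * (b - a) ^ 2 := by
      intro i hi; simp only [hcdef, if_neg (by omega : ¬ n + i < n)]
    rw [Finset.sum_congr rfl h1, Finset.sum_congr rfl h2, Finset.sum_const, Finset.sum_const]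
    simp only [Finset.card_range, nsmul_eq_mul]
    field_simp
    ring
  rw [hv]
  field_simp
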